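/- (Almost-sure convergence of the diagonal combining coefficient, equation (11a) with (12a).) Fix a subcarrier p ∈ {0,…,N−1}. For each antenna index m ∈ ℕ, define Y_m = conj(h̄_m(p)) · H̄^{ICI}_{m,pp}, and assume Y_0 is integrable. Then (1/M)·Σ_{m=0}^{M−1} Y_m converges almost surely to 1 − τ_av/N as M → ∞. -/

import Mathlib

open Finset MeasureTheory ProbabilityTheory Filter

/-- Frequency-domain channel coefficient `h̄_m(p) = ∑_{ℓ=0}^{L-1} h_m(ℓ)·e^{-2πiℓp/N}`. -/
noncomputable def hBar {Ω : Type*} (N L : ℕ) (h : ℕ → Ω → ℂ) (p : ℕ) (ω : Ω) : ℂ :=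
  ∑ ℓ ∈ range L, h ℓ ω *
    Complex.exp (-(2 * (Real.pi : ℂ) * Complex.I * (ℓ : ℂ) * (p : ℂ)) / (N : ℂ))

/-- Frequency-domain ICI matrix entry
`H̄^{ICI}_{m,pq} = (1/N)·∑_{n=0}^{N-1} ∑_{ℓ=0}^{L-1} h_m(ℓ)·e^{2πi(nq-ℓq-np)/N}·𝟙[ℓ ≤ n]`. -/
noncomputable def Hici {Ω : Type*} (N L : ℕ) (h : ℕ → Ω → ℂ) (p q : ℕ) (ω : Ω) : ℂ :=
  (1 / (N : ℂ)) * ∑ n ∈ range N, ∑ ℓ ∈ range L,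
    h ℓ ω * Complex.exp (2 * (Real.pi : ℂ) * Complex.I *
      ((((n * q : ℕ) : ℤ) - ((ℓ * q : ℕ) : ℤ) - ((n * p : ℕ) : ℤ) : ℤ) : ℂ) / (N : ℂ)) *
    (if ℓ ≤ n then 1 else 0)

/-- Auxiliary: the fixed Borel function of the tap vector whose value is
`conj(h̄(p))·H̄^{ICI}_{pp}`. -/
noncomputable def Fc (N L : ℕ) (p : ℕ) (v : Fin L → ℂ) : ℂ :=
  (starRingEnd ℂ) (∑ ℓ : Fin L, v ℓ *
      Complex.exp (-(2 * (Real.pi : ℂ) * Complex.I * ((ℓ : ℕ) : ℂ) * (p : ℂ)) / (N : ℂ))) *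
  ((1 / (N : ℂ)) * ∑ n ∈ range N, ∑ ℓ : Fin L,
    v ℓ * Complex.exp (2 * (Real.pi : ℂ) * Complex.I *
      ((((n * p : ℕ) : ℤ) - (((ℓ : ℕ) * p : ℕ) : ℤ) - ((n * p : ℕ) : ℤ) : ℤ) : ℂ) / (N : ℂ)) *
    (if (ℓ : ℕ) ≤ n then 1 else 0))

/-- Auxiliary: the unit-modulus factor `e^{-2πiℓp/N}`. -/
noncomputable def ec (N p ℓ : ℕ) : ℂ :=
  Complex.exp (-(2 * (Real.pi : ℂ) * Complex.I * (ℓ : ℂ) * (p : ℂ)) / (N : ℂ))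

theorem ec_conj_mul (N p ℓ : ℕ) : (starRingEnd ℂ) (ec N p ℓ) * ec N p ℓ = 1 := by
  unfold ec
  rw [← Complex.exp_conj, ← Complex.exp_add]
  have : (starRingEnd ℂ) (-(2 * (Real.pi : ℂ) * Complex.I * (ℓ : ℂ) * (p : ℂ)) / (N : ℂ))
      = (2 * (Real.pi : ℂ) * Complex.I * (ℓ : ℂ) * (p : ℂ)) / (N : ℂ) := by
    simp [map_div₀, Complex.conj_I, Complex.conj_ofReal, map_ofNat]
  rw [this]
  rw [show (2 * (Real.pi : ℂ) * Complex.I * (ℓ : ℂ) * (p : ℂ)) / (N : ℂ) +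
      (-(2 * (Real.pi : ℂ) * Complex.I * (ℓ : ℂ) * (p : ℂ)) / (N : ℂ)) = 0 by ring,
    Complex.exp_zero]

theorem Fc_meas (N L : ℕ) (p : ℕ) : Measurable (Fc N L p) := by
  unfold Fc
  refine Measurable.mul ?_ (measurable_const.mul ?_)
  · exact (Complex.continuous_conj.measurable).comp
      (Finset.measurable_sum _ fun ℓ _ => (measurable_pi_apply ℓ).mul_const _)
  · exact Finset.measurable_sum _ fun n _ => Finset.measurable_sum _ fun ℓ _ =>
      ((measurable_pi_apply ℓ).mul_const _).mul_const _

theorem Fc_eq {Ω : Type*} (N L : ℕ) (h : ℕ → Ω → ℂ) (p : ℕ) (ω : Ω) :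
    (starRingEnd ℂ) (hBar N L h p ω) * Hici N L h p p ω
      = Fc N L p (fun ℓ : Fin L => h ℓ ω) := by
  simp only [hBar, Hici, Fc, Finset.sum_range]

theorem Fc_expand (N L p : ℕ) (v : Fin L → ℂ) :
    Fc N L p v = ∑ ℓ : Fin L, ∑ ℓ' : Fin L,
      ((starRingEnd ℂ) (ec N p ℓ) * ((1 / (N : ℂ)) * ((N - (ℓ' : ℕ) : ℕ) : ℂ) * ec N p ℓ'))
        * (v ℓ' * (starRingEnd ℂ) (v ℓ)) := by
  have hE : ∀ (n : ℕ) (ℓ : Fin L),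
      Complex.exp (2 * (Real.pi : ℂ) * Complex.I *
        ((((n * p : ℕ) : ℤ) - (((ℓ : ℕ) * p : ℕ) : ℤ) - ((n * p : ℕ) : ℤ) : ℤ) : ℂ) / (N : ℂ))
      = ec N p ℓ := by
    intro n ℓ
    unfold ec
    congr 1
    push_cast
    ring
  have hcount : ∀ ℓ : Fin L, ∑ n ∈ range N, (if (ℓ : ℕ) ≤ n then (1 : ℂ) else 0)
      = ((N - (ℓ : ℕ) : ℕ) : ℂ) := by
    intro ℓ
    rw [Finset.sum_boole]
    have : (range N).filter (fun n => (ℓ : ℕ) ≤ n) = Finset.Ico (ℓ : ℕ) N := by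
      ext x
      simp only [Finset.mem_filter, Finset.mem_range, Finset.mem_Ico]
      omega
    rw [this, Nat.card_Ico]
  unfold Fc
  simp only [hE]
  rw [Finset.sum_comm]
  have hrow : ∀ ℓ : Fin L,
      ∑ n ∈ range N, (v ℓ * ec N p ℓ * (if (ℓ : ℕ) ≤ n then (1 : ℂ) else 0))
        = v ℓ * ec N p ℓ * ((N - (ℓ : ℕ) : ℕ) : ℂ) := by
    intro ℓ
    rw [← Finset.mul_sum, hcount]
  simp only [hrow]
  rw [map_sum, Finset.mul_sum, Finset.sum_mul_sum]
  exact Finset.sum_congr rfl fun ℓ _ => Finset.sum_congr rfl fun ℓ' _ => by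
    simp only [map_mul]; unfold ec; ring

/-- Almost-sure convergence of the diagonal combining coefficient (equation (11a) with
(12a)): `(1/M)·∑_{m=0}^{M-1} conj(h̄_m(p))·H̄^{ICI}_{m,pp} → 1 - τ_av/N` almost surely. -/
theorem stmt5 {Ω : Type*} [MeasurableSpace Ω] (μ : Measure Ω) [IsProbabilityMeasure μ]
    (N L : ℕ) (hL1 : 1 ≤ L) (hLN : L ≤ N)
    (ρ : ℕ → ℝ) (hnn : ∀ ℓ, 0 ≤ ρ ℓ) (hsum : ∑ ℓ ∈ range L, ρ ℓ = 1)
    (h : ℕ → ℕ → Ω → ℂ)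
    (hindep : iIndepFun
      (fun m ω => fun ℓ : Fin L => h m ℓ ω) μ)
    (hident : ∀ m : ℕ, IdentDistrib (fun ω => fun ℓ : Fin L => h m ℓ ω)
      (fun ω => fun ℓ : Fin L => h 0 ℓ ω) μ μ)
    (hint : ∀ m ℓ ℓ', ℓ < L → ℓ' < L →
      Integrable (fun ω => h m ℓ ω * (starRingEnd ℂ) (h m ℓ' ω)) μ)
    (hmean : ∀ m ℓ, ℓ < L → ∫ ω, h m ℓ ω ∂μ = 0)
    (hcov : ∀ m ℓ ℓ', ℓ < L → ℓ' < L →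
      ∫ ω, h m ℓ ω * (starRingEnd ℂ) (h m ℓ' ω) ∂μ = if ℓ = ℓ' then ((ρ ℓ : ℝ) : ℂ) else 0)
    (p : ℕ) (hp : p < N)
    (hY : Integrable (fun ω =>
      (starRingEnd ℂ) (hBar N L (h 0) p ω) * Hici N L (h 0) p p ω) μ) :
    ∀ᵐ ω ∂μ, Tendsto
      (fun M : ℕ => (M : ℂ)⁻¹ *
        ∑ m ∈ range M, (starRingEnd ℂ) (hBar N L (h m) p ω) * Hici N L (h m) p p ω)
      atTop
      (nhds (1 - ((∑ ℓ ∈ range L, (ℓ : ℝ) * ρ ℓ : ℝ) : ℂ) / (N : ℂ))) := by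
  have hN0 : (N : ℂ) ≠ 0 := by
    have : 0 < N := lt_of_lt_of_le hL1 hLN
    exact_mod_cast this.ne'
  set Y : ℕ → Ω → ℂ := fun m ω => Fc N L p (fun ℓ : Fin L => h m ℓ ω) with hYdef
  -- the composed sequence is pairwise independent and identically distributed
  have hYindep : Pairwise (Function.onFun (IndepFun · · μ) Y) := by
    intro i j hij
    exact (hindep.comp (fun _ => Fc N L p) (fun _ => Fc_meas N L p)).indepFun hij
  have hYident : ∀ m, IdentDistrib (Y m) (Y 0) μ μ :=
    fun m => (hident m).comp (Fc_meas N L p)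
  have hYint : Integrable (Y 0) μ := by
    have := hY
    simpa only [Fc_eq] using this
  -- strong law of large numbers
  have hSL := ProbabilityTheory.strong_law_ae (μ := μ) Y hYint hYindep hYident
  -- compute the expectation
  have hmeanY : ∫ ω, Y 0 ω ∂μ
      = 1 - ((∑ ℓ ∈ range L, (ℓ : ℝ) * ρ ℓ : ℝ) : ℂ) / (N : ℂ) := by
    have hterm : ∀ (ℓ ℓ' : Fin L),
        ∫ ω, ((starRingEnd ℂ) (ec N p ℓ) *
            ((1 / (N : ℂ)) * ((N - (ℓ' : ℕ) : ℕ) : ℂ) * ec N p ℓ'))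
          * (h 0 ℓ' ω * (starRingEnd ℂ) (h 0 ℓ ω)) ∂μ
        = ((starRingEnd ℂ) (ec N p ℓ) *
            ((1 / (N : ℂ)) * ((N - (ℓ' : ℕ) : ℕ) : ℂ) * ec N p ℓ'))
          * (if (ℓ' : ℕ) = (ℓ : ℕ) then ((ρ (ℓ' : ℕ) : ℝ) : ℂ) else 0) := by
      intro ℓ ℓ'
      rw [MeasureTheory.integral_const_mul, hcov 0 ℓ' ℓ ℓ'.isLt ℓ.isLt]
    calc ∫ ω, Y 0 ω ∂μ
        = ∫ ω, ∑ ℓ : Fin L, ∑ ℓ' : Fin L,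
            ((starRingEnd ℂ) (ec N p ℓ) *
              ((1 / (N : ℂ)) * ((N - (ℓ' : ℕ) : ℕ) : ℂ) * ec N p ℓ'))
            * (h 0 ℓ' ω * (starRingEnd ℂ) (h 0 ℓ ω)) ∂μ := by
          simp only [hYdef, Fc_expand]
      _ = ∑ ℓ : Fin L, ∑ ℓ' : Fin L,
            ((starRingEnd ℂ) (ec N p ℓ) *
              ((1 / (N : ℂ)) * ((N - (ℓ' : ℕ) : ℕ) : ℂ) * ec N p ℓ'))
            * (if (ℓ' : ℕ) = (ℓ : ℕ) then ((ρ (ℓ' : ℕ) : ℝ) : ℂ) else 0) := by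
          rw [integral_finset_sum]
          · exact Finset.sum_congr rfl fun ℓ _ => by
              rw [integral_finset_sum]
              · exact Finset.sum_congr rfl fun ℓ' _ => hterm ℓ ℓ'
              · exact fun ℓ' _ => (hint 0 ℓ' ℓ ℓ'.isLt ℓ.isLt).const_mul _
          · exact fun ℓ _ => integrable_finset_sum _
              (fun ℓ' _ => (hint 0 ℓ' ℓ ℓ'.isLt ℓ.isLt).const_mul _)
      _ = ∑ ℓ : Fin L, (1 / (N : ℂ)) * ((N - (ℓ : ℕ) : ℕ) : ℂ) * ((ρ (ℓ : ℕ) : ℝ) : ℂ) := by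
          refine Finset.sum_congr rfl fun ℓ _ => ?_
          rw [Finset.sum_eq_single ℓ]
          · rw [if_pos rfl,
              show ((starRingEnd ℂ) (ec N p ℓ) *
                  ((1 / (N : ℂ)) * ((N - (ℓ : ℕ) : ℕ) : ℂ) * ec N p ℓ)) * ((ρ (ℓ : ℕ) : ℝ) : ℂ)
                = ((starRingEnd ℂ) (ec N p ℓ) * ec N p ℓ) *
                  ((1 / (N : ℂ)) * ((N - (ℓ : ℕ) : ℕ) : ℂ) * ((ρ (ℓ : ℕ) : ℝ) : ℂ)) from by ring,
              ec_conj_mul, one_mul]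
          · intro ℓ'' _ hne
            rw [if_neg (by simpa [Fin.val_eq_val] using hne), mul_zero]
          · intro habs
            exact absurd (Finset.mem_univ ℓ) habs
      _ = 1 - ((∑ ℓ ∈ range L, (ℓ : ℝ) * ρ ℓ : ℝ) : ℂ) / (N : ℂ) := by
          rw [← Finset.sum_range
            (fun ℓ => (1 / (N : ℂ)) * ((N - ℓ : ℕ) : ℂ) * ((ρ ℓ : ℝ) : ℂ))]
          have hcast : ∀ ℓ ∈ range L,
              (1 / (N : ℂ)) * ((N - ℓ : ℕ) : ℂ) * ((ρ ℓ : ℝ) : ℂ)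
                = ((ρ ℓ : ℝ) : ℂ) - ((ℓ : ℂ) * ((ρ ℓ : ℝ) : ℂ)) / (N : ℂ) := by
            intro ℓ hℓ
            rw [Nat.cast_sub (le_trans (le_of_lt (mem_range.1 hℓ)) hLN)]
            field_simp
          rw [Finset.sum_congr rfl hcast, Finset.sum_sub_distrib, ← Finset.sum_div]
          congr 1
          · rw [← Complex.ofReal_sum, hsum, Complex.ofReal_one]
          · congr 1
            rw [Complex.ofReal_sum]
            exact Finset.sum_congr rfl fun ℓ _ => by push_cast; ring
  rw [hmeanY] at hSL
  filter_upwards [hSL] with ω hω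
  have : (fun M : ℕ => (M : ℂ)⁻¹ *
      ∑ m ∈ range M, (starRingEnd ℂ) (hBar N L (h m) p ω) * Hici N L (h m) p p ω)
      = fun n : ℕ => (n : ℝ)⁻¹ • ∑ i ∈ range n, Y i ω := by
    funext n
    simp only [Fc_eq, hYdef]
    rw [Complex.real_smul]
    push_cast
    ring
  rw [this]
  exact hω
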